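/- Let X_1, X_2, X_3 be jointly distributed random variables. If Δ(S) ≥ I(X_{{1,2}}; X_3) and Δ(S) ≥ I(X_{{1,3}}; X_2), where Δ(S) = (1/2)·(H(X_1)+H(X_2)+H(X_3)−H(X_1,X_2,X_3)), then I(X_1;X_2) = I(X_1;X_3) and I(X_2;X_3|X_1) = 0. -/

import Mathlib

open Finset

/-- The probability that the random variable `X` takes the value `a`. -/
noncomputable def prb {Ω α : Type*} [Fintype Ω] [DecidableEq α]
    (p : Ω → ℝ) (X : Ω → α) (a : α) : ℝ :=
  ∑ ω ∈ Finset.univ.filter (fun ω => X ω = a), p ω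

/-- Shannon entropy of a random variable `X` on a finite probability space. -/
noncomputable def ent {Ω α : Type*} [Fintype Ω] [Fintype α] [DecidableEq α]
    (p : Ω → ℝ) (X : Ω → α) : ℝ :=
  ∑ a : α, Real.negMulLog (prb p X a)

/-- Mutual information `I(X;Y) = H(X) + H(Y) - H(X,Y)`. -/
noncomputable def mi {Ω α β : Type*} [Fintype Ω] [Fintype α] [DecidableEq α]
    [Fintype β] [DecidableEq β] (p : Ω → ℝ) (X : Ω → α) (Y : Ω → β) : ℝ :=
  ent p X + ent p Y - ent p (fun ω => (X ω, Y ω))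

/-- Conditional mutual information `I(X;Y|W) = H(X,W) + H(Y,W) - H(X,Y,W) - H(W)`. -/
noncomputable def cmi {Ω α β γ : Type*} [Fintype Ω] [Fintype α] [DecidableEq α]
    [Fintype β] [DecidableEq β] [Fintype γ] [DecidableEq γ]
    (p : Ω → ℝ) (X : Ω → α) (Y : Ω → β) (W : Ω → γ) : ℝ :=
  ent p (fun ω => (X ω, W ω)) + ent p (fun ω => (Y ω, W ω))
    - ent p (fun ω => (X ω, Y ω, W ω)) - ent p W

/-- Conditional entropy `H(X|Y) = H(X,Y) - H(Y)`. -/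
noncomputable def condEnt {Ω α β : Type*} [Fintype Ω] [Fintype α] [DecidableEq α]
    [Fintype β] [DecidableEq β] (p : Ω → ℝ) (X : Ω → α) (Y : Ω → β) : ℝ :=
  ent p (fun ω => (X ω, Y ω)) - ent p Y

section Aux

set_option linter.unusedSectionVars false

variable {Ω α β γ : Type*} [Fintype Ω] [Fintype α] [DecidableEq α]
    [Fintype β] [DecidableEq β] [Fintype γ] [DecidableEq γ]

lemma prb_nonneg (p : Ω → ℝ) (hp0 : ∀ ω, 0 ≤ p ω) (X : Ω → α) (a : α) :
    0 ≤ prb p X a :=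
  Finset.sum_nonneg fun ω _ => hp0 ω

lemma prb_eq_sum_ite (p : Ω → ℝ) (X : Ω → α) (a : α) :
    prb p X a = ∑ ω : Ω, if X ω = a then p ω else 0 := by
  rw [prb, Finset.sum_filter]

lemma sum_prb (p : Ω → ℝ) (hp1 : ∑ ω : Ω, p ω = 1) (X : Ω → α) :
    ∑ a : α, prb p X a = 1 := by
  simp only [prb_eq_sum_ite]
  rw [Finset.sum_comm]
  simpa using hp1

lemma ent_equiv (p : Ω → ℝ) (e : α ≃ β) (Z : Ω → α) (Z' : Ω → β)
    (hZ : ∀ ω, Z' ω = e (Z ω)) : ent p Z' = ent p Z := by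
  have hZ' : Z' = fun ω => e (Z ω) := funext hZ
  subst hZ'
  rw [ent, ent, ← Equiv.sum_comp e (fun b => Real.negMulLog (prb p (fun ω => e (Z ω)) b))]
  refine Finset.sum_congr rfl fun a _ => ?_
  congr 1
  rw [prb, prb]
  congr 1
  ext ω
  simp [e.injective.eq_iff]

lemma prb_marg_left (p : Ω → ℝ) (X : Ω → α) (Y : Ω → β) (W : Ω → γ) (a : α) (c : γ) :
    prb p (fun ω => (X ω, W ω)) (a, c)
      = ∑ b : β, prb p (fun ω => (X ω, Y ω, W ω)) (a, b, c) := by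
  simp only [prb_eq_sum_ite, Prod.mk.injEq]
  rw [Finset.sum_comm]
  refine Finset.sum_congr rfl fun ω _ => ?_
  by_cases h : X ω = a ∧ W ω = c
  · simp [h.1, h.2]
  · rw [if_neg h, Finset.sum_eq_zero]
    intro b _
    rw [if_neg]
    tauto

lemma prb_marg_right (p : Ω → ℝ) (X : Ω → α) (Y : Ω → β) (W : Ω → γ) (b : β) (c : γ) :
    prb p (fun ω => (Y ω, W ω)) (b, c)
      = ∑ a : α, prb p (fun ω => (X ω, Y ω, W ω)) (a, b, c) := by
  simp only [prb_eq_sum_ite, Prod.mk.injEq]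
  rw [Finset.sum_comm]
  refine Finset.sum_congr rfl fun ω _ => ?_
  by_cases h : Y ω = b ∧ W ω = c
  · simp [h.1, h.2]
  · rw [if_neg h, Finset.sum_eq_zero]
    intro a _
    rw [if_neg]
    tauto

lemma prb_marg_w (p : Ω → ℝ) (X : Ω → α) (Y : Ω → β) (W : Ω → γ) (c : γ) :
    prb p W c = ∑ a : α, ∑ b : β, prb p (fun ω => (X ω, Y ω, W ω)) (a, b, c) := by
  simp only [prb_eq_sum_ite, Prod.mk.injEq]
  conv_rhs => enter [2, a]; rw [Finset.sum_comm]
  conv_rhs => rw [Finset.sum_comm]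
  refine Finset.sum_congr rfl fun ω _ => ?_
  by_cases h : W ω = c
  · simp [h, ite_and, Finset.sum_ite_eq]
  · rw [if_neg h, Finset.sum_eq_zero]
    intro a _
    rw [Finset.sum_eq_zero]
    intro b _
    rw [if_neg]
    tauto

lemma sum_rot [Fintype γ] (f : α → β → γ → ℝ) :
    ∑ a : α, ∑ b : β, ∑ c : γ, f a b c = ∑ c : γ, ∑ a : α, ∑ b : β, f a b c := by
  conv_lhs => enter [2, a]; rw [Finset.sum_comm]
  exact Finset.sum_comm

lemma sum_rot2 (f : α → β → γ → ℝ) :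
    ∑ a : α, ∑ b : β, ∑ c : γ, f a b c = ∑ b : β, ∑ c : γ, ∑ a : α, f a b c := by
  rw [Finset.sum_comm]
  exact Finset.sum_congr rfl fun b _ => Finset.sum_comm

lemma core_submod (q : α × β × γ → ℝ) (u : α → γ → ℝ) (v : β → γ → ℝ) (t : γ → ℝ)
    (hq : ∀ x, 0 ≤ q x) (hs : ∑ x : α × β × γ, q x = 1)
    (hu : ∀ a c, u a c = ∑ b : β, q (a, b, c))
    (hv : ∀ b c, v b c = ∑ a : α, q (a, b, c))
    (ht : ∀ c, t c = ∑ a : α, ∑ b : β, q (a, b, c)) :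
    ∑ x : α × β × γ, Real.negMulLog (q x) + ∑ c : γ, Real.negMulLog (t c)
    ≤ ∑ y : α × γ, Real.negMulLog (u y.1 y.2)
      + ∑ y : β × γ, Real.negMulLog (v y.1 y.2) := by
  have hu0 : ∀ a c, 0 ≤ u a c := fun a c => (hu a c) ▸ Finset.sum_nonneg fun b _ => hq _
  have hv0 : ∀ b c, 0 ≤ v b c := fun b c => (hv b c) ▸ Finset.sum_nonneg fun a _ => hq _
  have ht0 : ∀ c, 0 ≤ t c := fun c =>
    (ht c) ▸ Finset.sum_nonneg fun a _ => Finset.sum_nonneg fun b _ => hq _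
  have hqu : ∀ a b c, q (a, b, c) ≤ u a c := fun a b c => (hu a c) ▸
    Finset.single_le_sum (f := fun b => q (a, b, c)) (fun b _ => hq _) (mem_univ b)
  have hqv : ∀ a b c, q (a, b, c) ≤ v b c := fun a b c => (hv b c) ▸
    Finset.single_le_sum (f := fun a => q (a, b, c)) (fun a _ => hq _) (mem_univ a)
  have hut : ∀ a c, u a c ≤ t c := fun a c => by
    rw [ht]
    calc u a c = ∑ b : β, q (a, b, c) := hu a c
      _ ≤ ∑ a : α, ∑ b : β, q (a, b, c) :=
        Finset.single_le_sum (f := fun a => ∑ b : β, q (a, b, c))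
          (fun a _ => Finset.sum_nonneg fun b _ => hq _) (mem_univ a)
  have htu : ∀ c, t c = ∑ a : α, u a c := fun c => by
    rw [ht]; exact Finset.sum_congr rfl fun a _ => (hu a c).symm
  have htv : ∀ c, t c = ∑ b : β, v b c := fun c => by
    rw [ht, Finset.sum_comm]; exact Finset.sum_congr rfl fun b _ => (hv b c).symm
  have hsq : ∑ a : α, ∑ b : β, ∑ c : γ, q (a, b, c) = 1 := by
    rw [← hs]
    simp only [Fintype.sum_prod_type]
  have e1 : ∑ c : γ, t c * Real.log (t c)
      = ∑ x : α × β × γ, q x * Real.log (t x.2.2) := by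
    simp only [Fintype.sum_prod_type]
    rw [sum_rot (fun a b c => q (a, b, c) * Real.log (t c))]
    refine Finset.sum_congr rfl fun c _ => ?_
    rw [ht, Finset.sum_mul]
    exact Finset.sum_congr rfl fun a _ => Finset.sum_mul _ _ _
  have e2 : ∑ y : α × γ, u y.1 y.2 * Real.log (u y.1 y.2)
      = ∑ x : α × β × γ, q x * Real.log (u x.1 x.2.2) := by
    simp only [Fintype.sum_prod_type]
    refine Finset.sum_congr rfl fun a _ => ?_
    rw [Finset.sum_comm]
    refine Finset.sum_congr rfl fun c _ => ?_
    rw [hu, Finset.sum_mul]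
  have e3 : ∑ y : β × γ, v y.1 y.2 * Real.log (v y.1 y.2)
      = ∑ x : α × β × γ, q x * Real.log (v x.2.1 x.2.2) := by
    simp only [Fintype.sum_prod_type]
    rw [sum_rot2 (fun a b c => q (a, b, c) * Real.log (v b c))]
    refine Finset.sum_congr rfl fun b _ => Finset.sum_congr rfl fun c _ => ?_
    rw [hv, Finset.sum_mul]
  have hg : ∑ x : α × β × γ,
      (if t x.2.2 = 0 then 0 else u x.1 x.2.2 * v x.2.1 x.2.2 / t x.2.2) = 1 := by
    simp only [Fintype.sum_prod_type]
    rw [sum_rot (fun a b c => if t c = 0 then 0 else u a c * v b c / t c)]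
    have key : ∀ c : γ, ∑ a : α, ∑ b : β,
        (if t c = 0 then 0 else u a c * v b c / t c) = t c := by
      intro c
      by_cases htc : t c = 0
      · simp [htc]
      · simp only [if_neg htc]
        have hb : ∀ a, ∑ b : β, u a c * v b c / t c = u a c := by
          intro a
          rw [← Finset.sum_div, ← Finset.mul_sum, ← htv]
          field_simp
        rw [Finset.sum_congr rfl fun a _ => hb a, ← htu]
    rw [Finset.sum_congr rfl fun c _ => key c,
      Finset.sum_congr rfl fun c _ => ht c, ← sum_rot, hsq]
  have hpoint : ∀ x : α × β × γ,
      q x * (Real.log (u x.1 x.2.2) + Real.log (v x.2.1 x.2.2)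
        - Real.log (q x) - Real.log (t x.2.2))
      ≤ (if t x.2.2 = 0 then 0 else u x.1 x.2.2 * v x.2.1 x.2.2 / t x.2.2) - q x := by
    rintro ⟨a, b, c⟩
    dsimp only
    rcases eq_or_lt_of_le (hq (a, b, c)) with h0 | hpos
    · rw [← h0, zero_mul, sub_zero]
      split
      · exact le_rfl
      · exact div_nonneg (mul_nonneg (hu0 a c) (hv0 b c)) (ht0 c)
    · have hu' : 0 < u a c := lt_of_lt_of_le hpos (hqu a b c)
      have hv' : 0 < v b c := lt_of_lt_of_le hpos (hqv a b c)
      have ht' : 0 < t c := lt_of_lt_of_le hu' (hut a c)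
      rw [if_neg ht'.ne']
      have hz : 0 < u a c * v b c / (q (a, b, c) * t c) := by positivity
      have hlog : Real.log (u a c) + Real.log (v b c)
          - Real.log (q (a, b, c)) - Real.log (t c)
          = Real.log (u a c * v b c / (q (a, b, c) * t c)) := by
        rw [Real.log_div (mul_pos hu' hv').ne' (mul_pos hpos ht').ne',
          Real.log_mul hu'.ne' hv'.ne', Real.log_mul hpos.ne' ht'.ne']
        ring
      rw [hlog]
      calc q (a, b, c) * Real.log (u a c * v b c / (q (a, b, c) * t c))
          ≤ q (a, b, c) * (u a c * v b c / (q (a, b, c) * t c) - 1) :=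
            mul_le_mul_of_nonneg_left (Real.log_le_sub_one_of_pos hz) hpos.le
        _ = u a c * v b c / t c - q (a, b, c) := by
            field_simp
  have main := Finset.sum_le_sum (fun x (_ : x ∈ (univ : Finset (α × β × γ))) => hpoint x)
  rw [Finset.sum_sub_distrib, hg, hs] at main
  simp only [mul_add, mul_sub, Finset.sum_add_distrib, Finset.sum_sub_distrib] at main
  simp only [Real.negMulLog, neg_mul, Finset.sum_neg_distrib]
  linarith [e1, e2, e3, main]

/-- Strong subadditivity / nonnegativity of conditional mutual information. -/
lemma ent_submod (p : Ω → ℝ) (hp0 : ∀ ω, 0 ≤ p ω) (hp1 : ∑ ω : Ω, p ω = 1)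
    (X : Ω → α) (Y : Ω → β) (W : Ω → γ) :
    ent p (fun ω => (X ω, Y ω, W ω)) + ent p W
      ≤ ent p (fun ω => (X ω, W ω)) + ent p (fun ω => (Y ω, W ω)) := by
  have h := core_submod (prb p (fun ω => (X ω, Y ω, W ω)))
    (fun a c => prb p (fun ω => (X ω, W ω)) (a, c))
    (fun b c => prb p (fun ω => (Y ω, W ω)) (b, c))
    (fun c => prb p W c)
    (fun x => prb_nonneg p hp0 _ x)
    (sum_prb p hp1 _)
    (fun a c => prb_marg_left p X Y W a c)
    (fun b c => prb_marg_right p X Y W b c)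
    (fun c => prb_marg_w p X Y W c)
  simpa [ent] using h

end Aux

/-- If `Δ(S) ≥ I(X_{1,2};X_3)` and `Δ(S) ≥ I(X_{1,3};X_2)`, then
`I(X_1;X_2) = I(X_1;X_3)` and `I(X_2;X_3|X_1) = 0`. -/
theorem case1_equalities {Ω α β γ : Type*} [Fintype Ω] [Fintype α] [DecidableEq α]
    [Fintype β] [DecidableEq β] [Fintype γ] [DecidableEq γ]
    (p : Ω → ℝ) (hp0 : ∀ ω, 0 ≤ p ω) (hp1 : ∑ ω : Ω, p ω = 1)
    (X1 : Ω → α) (X2 : Ω → β) (X3 : Ω → γ)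
    (h1 : mi p (fun ω => (X1 ω, X2 ω)) X3
      ≤ (1/2) * (ent p X1 + ent p X2 + ent p X3 - ent p (fun ω => (X1 ω, X2 ω, X3 ω))))
    (h2 : mi p (fun ω => (X1 ω, X3 ω)) X2
      ≤ (1/2) * (ent p X1 + ent p X2 + ent p X3 - ent p (fun ω => (X1 ω, X2 ω, X3 ω)))) :
    mi p X1 X2 = mi p X1 X3 ∧ cmi p X2 X3 X1 = 0 := by
  -- strong subadditivity: H(X2,X3,X1) + H(X1) ≤ H(X2,X1) + H(X3,X1)
  have sub := ent_submod p hp0 hp1 X2 X3 X1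
  -- regrouping identities
  have g1 : ent p (fun ω => ((X1 ω, X2 ω), X3 ω)) = ent p (fun ω => (X1 ω, X2 ω, X3 ω)) :=
    ent_equiv p ⟨fun x => ((x.1, x.2.1), x.2.2), fun y => (y.1.1, y.1.2, y.2),
      fun ⟨a, b, c⟩ => rfl, fun ⟨⟨a, b⟩, c⟩ => rfl⟩ _ _ (fun ω => rfl)
  have g2 : ent p (fun ω => ((X1 ω, X3 ω), X2 ω)) = ent p (fun ω => (X1 ω, X2 ω, X3 ω)) :=
    ent_equiv p ⟨fun x => ((x.1, x.2.2), x.2.1), fun y => (y.1.1, y.2, y.1.2),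
      fun ⟨a, b, c⟩ => rfl, fun ⟨⟨a, c⟩, b⟩ => rfl⟩ _ _ (fun ω => rfl)
  have g3 : ent p (fun ω => (X2 ω, X1 ω)) = ent p (fun ω => (X1 ω, X2 ω)) :=
    ent_equiv p (Equiv.prodComm α β) _ _ (fun ω => rfl)
  have g4 : ent p (fun ω => (X3 ω, X1 ω)) = ent p (fun ω => (X1 ω, X3 ω)) :=
    ent_equiv p (Equiv.prodComm α γ) _ _ (fun ω => rfl)
  have g5 : ent p (fun ω => (X2 ω, X3 ω, X1 ω)) = ent p (fun ω => (X1 ω, X2 ω, X3 ω)) :=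
    ent_equiv p ⟨fun x => (x.2.1, x.2.2, x.1), fun y => (y.2.2, y.1, y.2.1),
      fun ⟨a, b, c⟩ => rfl, fun ⟨b, c, a⟩ => rfl⟩ _ _ (fun ω => rfl)
  simp only [mi, cmi] at h1 h2 ⊢
  rw [g1] at h1
  rw [g2] at h2
  rw [g3, g4, g5] at sub
  constructor <;> linarith
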